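/- Let n be an odd positive integer and for q = 1,2,3,4 let α₁q, α₂q, α₃q, α₄q be integers, each quadruple satisfying conditions (2.14), and assume the determinant d₄ of the 4×4 matrix (αₚq) satisfies gcd(d₄,n) = 1. Define M : (ZMod n)⁴ → ℕ by M(i,j,k,ℓ) = n³·Q⁽¹⁾.val + n²·Q⁽²⁾.val + n·Q⁽³⁾.val + Q⁽⁴⁾.val evaluated at (i,j,k,ℓ), where Q⁽q⁾(i,j,k,ℓ) = α₁q·i + α₂q·j + α₃q·k + α₄q·ℓ in ZMod n and .val denotes the canonical representative in {0,...,n−1}. Then M is a four-dimensional pandiagonal magic cube: (a) M is injective and every value of M lies in {0, 1, ..., n⁴−1} (so M is a bijection onto {0,...,n⁴−1}); and (b) for every direction vector d ∈ {−1,0,1}⁴ with d ≠ 0 and every point p ∈ (ZMod n)⁴, the sum over t ∈ ZMod n of M(p + t·d) equals n(n⁴−1)/2. -/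

import Mathlib

/-- Conditions (2.14) on the parameters `α₁, α₂, α₃, α₄` of a linear hypercube modulo
`n`, with `B = α₁ + α₂ + α₃ + α₄`. -/
def Cond214 (n : ℕ) (α₁ α₂ α₃ α₄ : ℤ) : Prop :=
  let a : Fin 4 → ℤ := ![α₁, α₂, α₃, α₄]
  let B : ℤ := α₁ + α₂ + α₃ + α₄
  (∀ m, Int.gcd (a m) n = 1) ∧
  (∀ m m', m ≠ m' → Int.gcd (a m + a m') n = 1) ∧
  (∀ m m', m ≠ m' → Int.gcd (a m - a m') n = 1) ∧
  Int.gcd B n = 1 ∧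
  (∀ m, Int.gcd (B - a m) n = 1) ∧
  (∀ m, Int.gcd (B - 2 * a m) n = 1) ∧
  (∀ m m', m ≠ m' → Int.gcd (B - a m' - 2 * a m) n = 1) ∧
  (∀ m m', m ≠ m' → Int.gcd (B - 2 * a m' - 2 * a m) n = 1)

lemma gcd_eq_pm {n : ℕ} {x y : ℤ} (h : Int.gcd x n = 1) (hy : y = x ∨ y = -x) :
    Int.gcd y n = 1 := by
  rcases hy with rfl | rfl
  · exact h
  · simpa [Int.gcd_def] using h

lemma isUnit_of_gcd {n : ℕ} {x : ℤ} (h : Int.gcd x n = 1) : IsUnit ((x : ZMod n)) := by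
  have hco : IsCoprime x (n : ℤ) := Int.isCoprime_iff_gcd_eq_one.mpr h
  obtain ⟨u, v, huv⟩ := hco
  apply IsUnit.of_mul_eq_one ((u : ZMod n))
  have := congrArg (fun z : ℤ => (z : ZMod n)) huv
  push_cast at this
  rw [ZMod.natCast_self, mul_zero, add_zero] at this
  rw [mul_comm] at this
  exact this

lemma step_digit {n x y a b : ℕ} (ha : a < n) (hb : b < n) (h : n * x + a = n * y + b) :
    x = y ∧ a = b := by
  have hn : 0 < n := lt_of_le_of_lt (Nat.zero_le a) ha
  have h1 : (n * x + a) % n = (n * y + b) % n := by rw [h]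
  rw [Nat.mul_add_mod, Nat.mul_add_mod, Nat.mod_eq_of_lt ha, Nat.mod_eq_of_lt hb] at h1
  subst h1
  refine ⟨Nat.eq_of_mul_eq_mul_left hn ?_, rfl⟩
  omega

lemma digits4 {n a1 a2 a3 a4 b1 b2 b3 b4 : ℕ}
    (h2 : a2 < n) (h3 : a3 < n) (h4 : a4 < n)
    (k2 : b2 < n) (k3 : b3 < n) (k4 : b4 < n)
    (h : n ^ 3 * a1 + n ^ 2 * a2 + n * a3 + a4 = n ^ 3 * b1 + n ^ 2 * b2 + n * b3 + b4) :
    a1 = b1 ∧ a2 = b2 ∧ a3 = b3 ∧ a4 = b4 := by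
  have h' : n * (n * (n * a1 + a2) + a3) + a4 = n * (n * (n * b1 + b2) + b3) + b4 := by
    rw [show n * (n * (n * a1 + a2) + a3) + a4 = n ^ 3 * a1 + n ^ 2 * a2 + n * a3 + a4 by ring,
      show n * (n * (n * b1 + b2) + b3) + b4 = n ^ 3 * b1 + n ^ 2 * b2 + n * b3 + b4 by ring, h]
  obtain ⟨hh2x, e4⟩ := step_digit h4 k4 h'
  obtain ⟨hh3x, e3⟩ := step_digit h3 k3 hh2x
  obtain ⟨e1, e2⟩ := step_digit h2 k2 hh3x
  exact ⟨e1, e2, e3, e4⟩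

lemma sum_val_univ (n : ℕ) [NeZero n] : ∑ z : ZMod n, z.val = ∑ i ∈ Finset.range n, i := by
  rw [← Fin.sum_univ_eq_sum_range]
  refine Fintype.sum_bijective (fun z : ZMod n => (⟨z.val, ZMod.val_lt z⟩ : Fin n)) ?_
    (fun z => z.val) (fun i => i.val) (fun z => rfl)
  rw [Fintype.bijective_iff_injective_and_card]
  refine ⟨fun x y hxy => ZMod.val_injective n (congrArg Fin.val hxy), by simp⟩

lemma sum_val_affine {n : ℕ} [NeZero n] (b c : ZMod n) (hc : IsUnit c) :
    ∑ t : ZMod n, (b + t * c).val = ∑ z : ZMod n, z.val := by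
  obtain ⟨u, rfl⟩ := hc
  exact Fintype.sum_bijective (((Units.mulRight u).trans (Equiv.addLeft b)))
    (Equiv.bijective _) _ (fun z => z.val) (fun t => rfl)

lemma key_unit (n : ℕ) (a0 a1 a2 a3 : ℤ) (hC : Cond214 n a0 a1 a2 a3)
    (e0 e1 e2 e3 : ℤ)
    (he0 : e0 = -1 ∨ e0 = 0 ∨ e0 = 1) (he1 : e1 = -1 ∨ e1 = 0 ∨ e1 = 1)
    (he2 : e2 = -1 ∨ e2 = 0 ∨ e2 = 1) (he3 : e3 = -1 ∨ e3 = 0 ∨ e3 = 1)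
    (hne : ¬ (e0 = 0 ∧ e1 = 0 ∧ e2 = 0 ∧ e3 = 0)) :
    Int.gcd (e0 * a0 + e1 * a1 + e2 * a2 + e3 * a3) n = 1 := by
  obtain ⟨h1, h2, h3, h4, h5, h6, h7, h8⟩ := hC
  have g0 : Int.gcd (a0) n = 1 := by simpa using h1 0
  have g1 : Int.gcd (a1) n = 1 := by simpa using h1 1
  have g2 : Int.gcd (a2) n = 1 := by simpa using h1 2
  have g3 : Int.gcd (a3) n = 1 := by simpa using h1 3
  have s01 : Int.gcd (a0 + a1) n = 1 := by simpa using h2 0 1 (by decide)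
  have dd01 : Int.gcd (a0 - a1) n = 1 := by simpa using h3 0 1 (by decide)
  have s02 : Int.gcd (a0 + a2) n = 1 := by simpa using h2 0 2 (by decide)
  have dd02 : Int.gcd (a0 - a2) n = 1 := by simpa using h3 0 2 (by decide)
  have s03 : Int.gcd (a0 + a3) n = 1 := by simpa using h2 0 3 (by decide)
  have dd03 : Int.gcd (a0 - a3) n = 1 := by simpa using h3 0 3 (by decide)
  have s12 : Int.gcd (a1 + a2) n = 1 := by simpa using h2 1 2 (by decide)
  have dd12 : Int.gcd (a1 - a2) n = 1 := by simpa using h3 1 2 (by decide)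
  have s13 : Int.gcd (a1 + a3) n = 1 := by simpa using h2 1 3 (by decide)
  have dd13 : Int.gcd (a1 - a3) n = 1 := by simpa using h3 1 3 (by decide)
  have s23 : Int.gcd (a2 + a3) n = 1 := by simpa using h2 2 3 (by decide)
  have dd23 : Int.gcd (a2 - a3) n = 1 := by simpa using h3 2 3 (by decide)
  have gB : Int.gcd (a0 + a1 + a2 + a3) n = 1 := h4
  have b0 : Int.gcd (a1 + a2 + a3) n = 1 := by have := h5 0; simp at this; convert this using 2 <;> ring
  have b1 : Int.gcd (a0 + a2 + a3) n = 1 := by have := h5 1; simp at this; convert this using 2 <;> ring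
  have b2 : Int.gcd (a0 + a1 + a3) n = 1 := by have := h5 2; simp at this; convert this using 2 <;> ring
  have b3 : Int.gcd (a0 + a1 + a2) n = 1 := by have := h5 3; simp at this; convert this using 2 <;> ring
  have c0 : Int.gcd (- a0 + a1 + a2 + a3) n = 1 := by have := h6 0; simp at this; convert this using 2 <;> ring
  have c1 : Int.gcd (a0 - a1 + a2 + a3) n = 1 := by have := h6 1; simp at this; convert this using 2 <;> ring
  have c2 : Int.gcd (a0 + a1 - a2 + a3) n = 1 := by have := h6 2; simp at this; convert this using 2 <;> ring
  have c3 : Int.gcd (a0 + a1 + a2 - a3) n = 1 := by have := h6 3; simp at this; convert this using 2 <;> ring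
  have p01 : Int.gcd (- a0 + a2 + a3) n = 1 := by have := h7 0 1 (by decide); simp at this; convert this using 2 <;> ring
  have p02 : Int.gcd (- a0 + a1 + a3) n = 1 := by have := h7 0 2 (by decide); simp at this; convert this using 2 <;> ring
  have p03 : Int.gcd (- a0 + a1 + a2) n = 1 := by have := h7 0 3 (by decide); simp at this; convert this using 2 <;> ring
  have p10 : Int.gcd (- a1 + a2 + a3) n = 1 := by have := h7 1 0 (by decide); simp at this; convert this using 2 <;> ring
  have p12 : Int.gcd (a0 - a1 + a3) n = 1 := by have := h7 1 2 (by decide); simp at this; convert this using 2 <;> ring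
  have p13 : Int.gcd (a0 - a1 + a2) n = 1 := by have := h7 1 3 (by decide); simp at this; convert this using 2 <;> ring
  have p20 : Int.gcd (a1 - a2 + a3) n = 1 := by have := h7 2 0 (by decide); simp at this; convert this using 2 <;> ring
  have p21 : Int.gcd (a0 - a2 + a3) n = 1 := by have := h7 2 1 (by decide); simp at this; convert this using 2 <;> ring
  have p23 : Int.gcd (a0 + a1 - a2) n = 1 := by have := h7 2 3 (by decide); simp at this; convert this using 2 <;> ring
  have p30 : Int.gcd (a1 + a2 - a3) n = 1 := by have := h7 3 0 (by decide); simp at this; convert this using 2 <;> ring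
  have p31 : Int.gcd (a0 + a2 - a3) n = 1 := by have := h7 3 1 (by decide); simp at this; convert this using 2 <;> ring
  have p32 : Int.gcd (a0 + a1 - a3) n = 1 := by have := h7 3 2 (by decide); simp at this; convert this using 2 <;> ring
  have f01 : Int.gcd (- a0 - a1 + a2 + a3) n = 1 := by have := h8 0 1 (by decide); simp at this; convert this using 2 <;> ring
  have f02 : Int.gcd (- a0 + a1 - a2 + a3) n = 1 := by have := h8 0 2 (by decide); simp at this; convert this using 2 <;> ring
  have f03 : Int.gcd (- a0 + a1 + a2 - a3) n = 1 := by have := h8 0 3 (by decide); simp at this; convert this using 2 <;> ring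
  have f12 : Int.gcd (a0 - a1 - a2 + a3) n = 1 := by have := h8 1 2 (by decide); simp at this; convert this using 2 <;> ring
  have f13 : Int.gcd (a0 - a1 + a2 - a3) n = 1 := by have := h8 1 3 (by decide); simp at this; convert this using 2 <;> ring
  have f23 : Int.gcd (a0 + a1 - a2 - a3) n = 1 := by have := h8 2 3 (by decide); simp at this; convert this using 2 <;> ring
  clear h1 h2 h3 h4 h5 h6 h7 h8
  rcases he0 with rfl | rfl | rfl <;> rcases he1 with rfl | rfl | rfl <;>
    rcases he2 with rfl | rfl | rfl <;> rcases he3 with rfl | rfl | rfl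
  · exact gcd_eq_pm gB (Or.inr (by ring))
  · exact gcd_eq_pm b3 (Or.inr (by ring))
  · exact gcd_eq_pm c3 (Or.inr (by ring))
  · exact gcd_eq_pm b2 (Or.inr (by ring))
  · exact gcd_eq_pm s01 (Or.inr (by ring))
  · exact gcd_eq_pm p32 (Or.inr (by ring))
  · exact gcd_eq_pm c2 (Or.inr (by ring))
  · exact gcd_eq_pm p23 (Or.inr (by ring))
  · exact gcd_eq_pm f01 (Or.inl (by ring))
  · exact gcd_eq_pm b1 (Or.inr (by ring))
  · exact gcd_eq_pm s02 (Or.inr (by ring))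
  · exact gcd_eq_pm p31 (Or.inr (by ring))
  · exact gcd_eq_pm s03 (Or.inr (by ring))
  · exact gcd_eq_pm g0 (Or.inr (by ring))
  · exact gcd_eq_pm dd03 (Or.inr (by ring))
  · exact gcd_eq_pm p21 (Or.inr (by ring))
  · exact gcd_eq_pm dd02 (Or.inr (by ring))
  · exact gcd_eq_pm p01 (Or.inl (by ring))
  · exact gcd_eq_pm c1 (Or.inr (by ring))
  · exact gcd_eq_pm p13 (Or.inr (by ring))
  · exact gcd_eq_pm f02 (Or.inl (by ring))
  · exact gcd_eq_pm p12 (Or.inr (by ring))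
  · exact gcd_eq_pm dd01 (Or.inr (by ring))
  · exact gcd_eq_pm p02 (Or.inl (by ring))
  · exact gcd_eq_pm f03 (Or.inl (by ring))
  · exact gcd_eq_pm p03 (Or.inl (by ring))
  · exact gcd_eq_pm c0 (Or.inl (by ring))
  · exact gcd_eq_pm b0 (Or.inr (by ring))
  · exact gcd_eq_pm s12 (Or.inr (by ring))
  · exact gcd_eq_pm p30 (Or.inr (by ring))
  · exact gcd_eq_pm s13 (Or.inr (by ring))
  · exact gcd_eq_pm g1 (Or.inr (by ring))
  · exact gcd_eq_pm dd13 (Or.inr (by ring))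
  · exact gcd_eq_pm p20 (Or.inr (by ring))
  · exact gcd_eq_pm dd12 (Or.inr (by ring))
  · exact gcd_eq_pm p10 (Or.inl (by ring))
  · exact gcd_eq_pm s23 (Or.inr (by ring))
  · exact gcd_eq_pm g2 (Or.inr (by ring))
  · exact gcd_eq_pm dd23 (Or.inr (by ring))
  · exact gcd_eq_pm g3 (Or.inr (by ring))
  · exact absurd ⟨rfl, rfl, rfl, rfl⟩ hne
  · exact gcd_eq_pm g3 (Or.inl (by ring))
  · exact gcd_eq_pm dd23 (Or.inl (by ring))
  · exact gcd_eq_pm g2 (Or.inl (by ring))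
  · exact gcd_eq_pm s23 (Or.inl (by ring))
  · exact gcd_eq_pm p10 (Or.inr (by ring))
  · exact gcd_eq_pm dd12 (Or.inl (by ring))
  · exact gcd_eq_pm p20 (Or.inl (by ring))
  · exact gcd_eq_pm dd13 (Or.inl (by ring))
  · exact gcd_eq_pm g1 (Or.inl (by ring))
  · exact gcd_eq_pm s13 (Or.inl (by ring))
  · exact gcd_eq_pm p30 (Or.inl (by ring))
  · exact gcd_eq_pm s12 (Or.inl (by ring))
  · exact gcd_eq_pm b0 (Or.inl (by ring))
  · exact gcd_eq_pm c0 (Or.inr (by ring))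
  · exact gcd_eq_pm p03 (Or.inr (by ring))
  · exact gcd_eq_pm f03 (Or.inr (by ring))
  · exact gcd_eq_pm p02 (Or.inr (by ring))
  · exact gcd_eq_pm dd01 (Or.inl (by ring))
  · exact gcd_eq_pm p12 (Or.inl (by ring))
  · exact gcd_eq_pm f02 (Or.inr (by ring))
  · exact gcd_eq_pm p13 (Or.inl (by ring))
  · exact gcd_eq_pm c1 (Or.inl (by ring))
  · exact gcd_eq_pm p01 (Or.inr (by ring))
  · exact gcd_eq_pm dd02 (Or.inl (by ring))
  · exact gcd_eq_pm p21 (Or.inl (by ring))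
  · exact gcd_eq_pm dd03 (Or.inl (by ring))
  · exact gcd_eq_pm g0 (Or.inl (by ring))
  · exact gcd_eq_pm s03 (Or.inl (by ring))
  · exact gcd_eq_pm p31 (Or.inl (by ring))
  · exact gcd_eq_pm s02 (Or.inl (by ring))
  · exact gcd_eq_pm b1 (Or.inl (by ring))
  · exact gcd_eq_pm f01 (Or.inr (by ring))
  · exact gcd_eq_pm p23 (Or.inl (by ring))
  · exact gcd_eq_pm c2 (Or.inl (by ring))
  · exact gcd_eq_pm p32 (Or.inl (by ring))
  · exact gcd_eq_pm s01 (Or.inl (by ring))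
  · exact gcd_eq_pm b2 (Or.inl (by ring))
  · exact gcd_eq_pm c3 (Or.inl (by ring))
  · exact gcd_eq_pm b3 (Or.inl (by ring))
  · exact gcd_eq_pm gB (Or.inl (by ring))

/-- **Theorem 3.3.** For odd `n`, four quadruples `(α₁q,α₂q,α₃q,α₄q)`
each satisfying conditions (2.14) with determinant coprime to `n`, the array
`M = n³·Q⁽¹⁾.val + n²·Q⁽²⁾.val + n·Q⁽³⁾.val + Q⁽⁴⁾.val` (with
`Q⁽q⁾(i,j,k,ℓ) = α₁q·i + α₂q·j + α₃q·k + α₄q·ℓ`) is a four-dimensional pandiagonal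
magic cube: a bijection onto `{0, …, n⁴-1}` in which every line with direction a
nonzero vector in `{-1,0,1}⁴` sums to `n(n⁴-1)/2`. -/
theorem magic_pandiagonal_hypercube
    (n : ℕ) (hodd : Odd n) [NeZero n] (α : Fin 4 → Fin 4 → ℤ)
    (hc : ∀ q : Fin 4, Cond214 n (α 0 q) (α 1 q) (α 2 q) (α 3 q))
    (hdet : Int.gcd (Matrix.det (Matrix.of fun p q : Fin 4 => α p q)) n = 1)
    (Q : Fin 4 → ZMod n → ZMod n → ZMod n → ZMod n → ZMod n)
    (hQ : ∀ q i j k l, Q q i j k l =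
      (α 0 q : ZMod n) * i + (α 1 q : ZMod n) * j + (α 2 q : ZMod n) * k +
        (α 3 q : ZMod n) * l)
    (M : ZMod n → ZMod n → ZMod n → ZMod n → ℕ)
    (hM : ∀ i j k l, M i j k l =
      n ^ 3 * (Q 0 i j k l).val + n ^ 2 * (Q 1 i j k l).val +
        n * (Q 2 i j k l).val + (Q 3 i j k l).val) :
    (Function.Injective
      fun v : ZMod n × ZMod n × ZMod n × ZMod n => M v.1 v.2.1 v.2.2.1 v.2.2.2) ∧
    (∀ i j k l : ZMod n, M i j k l < n ^ 4) ∧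
    (∀ d₁ d₂ d₃ d₄ : ZMod n,
      d₁ ∈ ({-1, 0, 1} : Set (ZMod n)) →
      d₂ ∈ ({-1, 0, 1} : Set (ZMod n)) →
      d₃ ∈ ({-1, 0, 1} : Set (ZMod n)) →
      d₄ ∈ ({-1, 0, 1} : Set (ZMod n)) →
      ¬ (d₁ = 0 ∧ d₂ = 0 ∧ d₃ = 0 ∧ d₄ = 0) →
      ∀ p₁ p₂ p₃ p₄ : ZMod n,
        ∑ t : ZMod n, M (p₁ + t * d₁) (p₂ + t * d₂) (p₃ + t * d₃) (p₄ + t * d₄) =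
          n * (n ^ 4 - 1) / 2) := by
  have hn1 : 1 ≤ n := Nat.one_le_iff_ne_zero.mpr (NeZero.ne n)
  refine ⟨?_, ?_, ?_⟩
  · -- Injectivity
    set A : Matrix (Fin 4) (Fin 4) (ZMod n) :=
      Matrix.of (fun q p : Fin 4 => ((α p q : ℤ) : ZMod n)) with hA
    have hdetA : IsUnit A.det := by
      have hAeq : A = (Matrix.transpose (Matrix.of fun p q : Fin 4 => α p q)).map
          (Int.castRingHom (ZMod n)) := by
        ext q p
        simp [hA, Matrix.transpose_apply, Matrix.map_apply]
      rw [hAeq, ← RingHom.mapMatrix_apply, ← RingHom.map_det, Matrix.det_transpose]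
      exact isUnit_of_gcd hdet
    have hAQ : ∀ (i j k l : ZMod n) (q : Fin 4),
        A.mulVec ![i, j, k, l] q = Q q i j k l := by
      intro i j k l q
      rw [hQ]
      simp [hA, Matrix.mulVec, dotProduct, Fin.sum_univ_four]
    have hinj : Function.Injective A.mulVec := by
      intro x y hxy
      have h2 := congrArg (fun z => (A⁻¹).mulVec z) hxy
      simpa [Matrix.mulVec_mulVec, Matrix.nonsing_inv_mul A hdetA,
        Matrix.one_mulVec] using h2
    rintro ⟨i, j, k, l⟩ ⟨i', j', k', l'⟩ h
    simp only at h
    rw [hM, hM] at h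
    obtain ⟨u1, u2, u3, u4⟩ := digits4 (ZMod.val_lt _) (ZMod.val_lt _) (ZMod.val_lt _)
      (ZMod.val_lt _) (ZMod.val_lt _) (ZMod.val_lt _) h
    have q0 := ZMod.val_injective n u1
    have q1 := ZMod.val_injective n u2
    have q2 := ZMod.val_injective n u3
    have q3 := ZMod.val_injective n u4
    have hxy : A.mulVec ![i, j, k, l] = A.mulVec ![i', j', k', l'] := by
      funext q
      rw [hAQ, hAQ]
      fin_cases q
      · exact q0
      · exact q1
      · exact q2
      · exact q3
    have hv := hinj hxy
    have e0 : i = i' := by simpa using congrFun hv 0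
    have e1 : j = j' := by simpa using congrFun hv 1
    have e2 : k = k' := by simpa using congrFun hv 2
    have e3 : l = l' := by simpa using congrFun hv 3
    simp [e0, e1, e2, e3]
  · -- Bounds
    intro i j k l
    obtain ⟨m, rfl⟩ : ∃ m, n = m + 1 := ⟨n - 1, by omega⟩
    rw [hM]
    have v0 : (Q 0 i j k l).val ≤ m := by have := ZMod.val_lt (Q 0 i j k l); omega
    have v1 : (Q 1 i j k l).val ≤ m := by have := ZMod.val_lt (Q 1 i j k l); omega
    have v2 : (Q 2 i j k l).val ≤ m := by have := ZMod.val_lt (Q 2 i j k l); omega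
    have v3 : (Q 3 i j k l).val ≤ m := by have := ZMod.val_lt (Q 3 i j k l); omega
    have key : (m + 1) ^ 4 = (m + 1) ^ 3 * m + (m + 1) ^ 2 * m + (m + 1) * m + m + 1 := by
      ring
    have t0 : (m + 1) ^ 3 * (Q 0 i j k l).val ≤ (m + 1) ^ 3 * m :=
      Nat.mul_le_mul_left _ v0
    have t1 : (m + 1) ^ 2 * (Q 1 i j k l).val ≤ (m + 1) ^ 2 * m :=
      Nat.mul_le_mul_left _ v1
    have t2 : (m + 1) * (Q 2 i j k l).val ≤ (m + 1) * m :=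
      Nat.mul_le_mul_left _ v2
    omega
  · -- Line sums
    intro d₁ d₂ d₃ d₄ hd1 hd2 hd3 hd4 hdn p₁ p₂ p₃ p₄
    have ext : ∀ d : ZMod n, d ∈ ({-1, 0, 1} : Set (ZMod n)) →
        ∃ e : ℤ, (e = -1 ∨ e = 0 ∨ e = 1) ∧ ((e : ZMod n) = d) ∧ (d ≠ 0 → e ≠ 0) := by
      intro d hd
      simp only [Set.mem_insert_iff, Set.mem_singleton_iff] at hd
      rcases hd with rfl | rfl | rfl
      · exact ⟨-1, Or.inl rfl, by push_cast; ring, fun _ => by norm_num⟩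
      · exact ⟨0, Or.inr (Or.inl rfl), by push_cast; ring, fun h => absurd rfl h⟩
      · exact ⟨1, Or.inr (Or.inr rfl), by push_cast; ring, fun _ => by norm_num⟩
    obtain ⟨e1, he1, hc1, hz1⟩ := ext d₁ hd1
    obtain ⟨e2, he2, hc2, hz2⟩ := ext d₂ hd2
    obtain ⟨e3, he3, hc3, hz3⟩ := ext d₃ hd3
    obtain ⟨e4, he4, hc4, hz4⟩ := ext d₄ hd4
    have hne' : ¬ (e1 = 0 ∧ e2 = 0 ∧ e3 = 0 ∧ e4 = 0) := by
      rintro ⟨z1, z2, z3, z4⟩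
      exact hdn ⟨by rw [← hc1, z1]; exact Int.cast_zero,
        by rw [← hc2, z2]; exact Int.cast_zero,
        by rw [← hc3, z3]; exact Int.cast_zero,
        by rw [← hc4, z4]; exact Int.cast_zero⟩
    have main : ∀ q : Fin 4,
        ∑ t : ZMod n, (Q q (p₁ + t * d₁) (p₂ + t * d₂) (p₃ + t * d₃) (p₄ + t * d₄)).val
          = ∑ z : ZMod n, z.val := by
      intro q
      have hg : Int.gcd (e1 * α 0 q + e2 * α 1 q + e3 * α 2 q + e4 * α 3 q) n = 1 :=
        key_unit n _ _ _ _ (hc q) e1 e2 e3 e4 he1 he2 he3 he4 hne'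
      have hu : IsUnit (((e1 * α 0 q + e2 * α 1 q + e3 * α 2 q + e4 * α 3 q : ℤ) :
          ZMod n)) := isUnit_of_gcd hg
      have hline : ∀ t : ZMod n,
          Q q (p₁ + t * d₁) (p₂ + t * d₂) (p₃ + t * d₃) (p₄ + t * d₄)
            = Q q p₁ p₂ p₃ p₄ +
              t * ((e1 * α 0 q + e2 * α 1 q + e3 * α 2 q + e4 * α 3 q : ℤ) : ZMod n) := by
        intro t
        rw [hQ, hQ, ← hc1, ← hc2, ← hc3, ← hc4]
        push_cast
        ring
      simp only [hline]
      exact sum_val_affine _ _ hu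
    have S2 : 2 * (∑ z : ZMod n, z.val) = n * (n - 1) := by
      rw [sum_val_univ, mul_comm]
      exact Finset.sum_range_id_mul_two n
    have hsum : ∑ t : ZMod n, M (p₁ + t * d₁) (p₂ + t * d₂) (p₃ + t * d₃) (p₄ + t * d₄)
        = n ^ 3 * (∑ z : ZMod n, z.val) + n ^ 2 * (∑ z : ZMod n, z.val) +
          n * (∑ z : ZMod n, z.val) + (∑ z : ZMod n, z.val) := by
      simp only [hM]
      rw [Finset.sum_add_distrib, Finset.sum_add_distrib, Finset.sum_add_distrib,
        ← Finset.mul_sum, ← Finset.mul_sum, ← Finset.mul_sum]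
      rw [main 0, main 1, main 2, main 3]
    rw [hsum]
    set S := ∑ z : ZMod n, z.val with hS
    have h4 : 1 ≤ n ^ 4 := Nat.one_le_pow _ _ (by omega)
    have efac : (n - 1) * (n ^ 3 + n ^ 2 + n + 1) = n ^ 4 - 1 := by
      zify [hn1, h4]
      ring
    have h2 : n * (n ^ 4 - 1) = 2 * (n ^ 3 * S + n ^ 2 * S + n * S + S) :=
      calc n * (n ^ 4 - 1) = n * ((n - 1) * (n ^ 3 + n ^ 2 + n + 1)) := by rw [efac]
        _ = (n ^ 3 + n ^ 2 + n + 1) * (n * (n - 1)) := by ring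
        _ = (n ^ 3 + n ^ 2 + n + 1) * (2 * S) := by rw [← S2]
        _ = 2 * (n ^ 3 * S + n ^ 2 * S + n * S + S) := by ring
    omega
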